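/- Let F ⊆ K be a field extension, and let n ≤ p be positive integers with |F| > n (F may be finite or infinite). Let A ∈ Mat_{n,p}(F) and let V₀ be a linear subspace of Mat_{n,p}(F) such that rank(A + N) < n for all N ∈ V₀. Then, viewing matrices over F as matrices over K via the inclusion, every matrix of the form A + Σᵢ cᵢ Nᵢ with c₁,…,c_k ∈ K and N₁,…,N_k ∈ V₀ has rank (over K) less than n. -/

import Mathlib

open Matrix MvPolynomial

/-- If a matrix has rank `< n` (with `n` rows), every `n×n` column-submatrix has zero det. -/
lemma aux_det_submatrix_eq_zero {R : Type*} [Field R] {n p : ℕ}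
    (M : Matrix (Fin n) (Fin p) R) (h : M.rank < n) (S : Fin n → Fin p) :
    (M.submatrix id S).det = 0 := by
  by_contra hd
  have hu : IsUnit (M.submatrix id S) :=
    (Matrix.isUnit_iff_isUnit_det _).mpr (isUnit_iff_ne_zero.mpr hd)
  have h1 : (M.submatrix id S).rank = n := by
    rw [Matrix.rank_of_isUnit _ hu, Fintype.card_fin]
  have h2 : M.submatrix id S = M * (1 : Matrix (Fin p) (Fin p) R).submatrix (Equiv.refl _) S := by
    rw [Matrix.mul_submatrix_one]
    rfl
  have h3 : (M.submatrix id S).rank ≤ M.rank := by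
    rw [h2]; exact Matrix.rank_mul_le_left _ _
  omega

/-- If every `n×n` column-submatrix has zero det, the rank is `< n` (needs `0 < n`). -/
lemma aux_rank_lt_of_det_submatrix {R : Type*} [Field R] {n p : ℕ} (hn : 0 < n)
    (M : Matrix (Fin n) (Fin p) R) (h : ∀ S : Fin n → Fin p, (M.submatrix id S).det = 0) :
    M.rank < n := by
  by_contra hr
  push_neg at hr
  have hrank : M.rank = n := le_antisymm (M.rank_le_card_height.trans (Fintype.card_fin n).le) hr
  have hspan : Submodule.span R (Set.range Mᵀ) = ⊤ := by
    apply Submodule.eq_top_of_finrank_eq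
    change Module.finrank R (Submodule.span R (Set.range M.col)) = _
    rw [← Matrix.rank_eq_finrank_span_cols, hrank, Module.finrank_fintype_fun_eq_card,
      Fintype.card_fin]
  obtain ⟨t, hts, htspan, htind⟩ := exists_linearIndependent R (Set.range Mᵀ)
  have htop : ⊤ ≤ Submodule.span R (Set.range ((↑) : t → (Fin n → R))) := by
    rw [Subtype.range_coe, htspan, hspan]
  let b : Module.Basis t R (Fin n → R) := Module.Basis.mk htind htop
  haveI : Fintype t := FiniteDimensional.fintypeBasisIndex b
  have hcardt : Fintype.card t = n := by
    have := Module.finrank_eq_card_basis b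
    rw [Module.finrank_fintype_fun_eq_card, Fintype.card_fin] at this
    omega
  let e : Fin n ≃ t := (Fintype.equivFinOfCardEq hcardt).symm
  have hg : ∀ x : t, ∃ j : Fin p, Mᵀ j = (x : Fin n → R) := fun x => hts x.2
  choose g hgspec using hg
  set S : Fin n → Fin p := fun i => g (e i) with hS
  have hcols : LinearIndependent R (fun i : Fin n => (M.submatrix id S)ᵀ i) := by
    have : (fun i : Fin n => (M.submatrix id S)ᵀ i) = (fun x : t => (x : Fin n → R)) ∘ e := by
      funext i
      show Mᵀ (S i) = _
      rw [hS]
      exact hgspec (e i)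
    rw [this]
    exact htind.comp e e.injective
  have hu : IsUnit (M.submatrix id S) := Matrix.linearIndependent_cols_iff_isUnit.mp hcols
  have := ((Matrix.isUnit_iff_isUnit_det _).mp hu).ne_zero
  exact this (h S)

/-- Total degree of the determinant of a matrix of affine polynomials. -/
lemma aux_det_totalDegree {F : Type*} [CommRing F] {n k : ℕ}
    (M : Matrix (Fin n) (Fin n) (MvPolynomial (Fin k) F))
    (h : ∀ i j, (M i j).totalDegree ≤ 1) : M.det.totalDegree ≤ n := by
  rw [Matrix.det_apply]
  refine (MvPolynomial.totalDegree_finset_sum _ _).trans (Finset.sup_le fun σ _ => ?_)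
  refine (MvPolynomial.totalDegree_smul_le _ _).trans ?_
  refine (MvPolynomial.totalDegree_finset_prod _ _).trans ?_
  calc ∑ i, (M (σ i) i).totalDegree ≤ ∑ _i : Fin n, 1 := Finset.sum_le_sum fun i _ => h _ _
    _ = n := by simp


/-- A multivariate polynomial over a field, of total degree less than the cardinality of
the field, vanishing at every point, is zero. -/
lemma aux_mv_eq_zero {F : Type*} [Field F] : ∀ (k : ℕ) (P : MvPolynomial (Fin k) F),
    (P.totalDegree : Cardinal) < Cardinal.mk F → (∀ v : Fin k → F, eval v P = 0) → P = 0 := by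
  intro k
  induction k with
  | zero =>
    intro P _ hv
    obtain ⟨a, rfl⟩ := MvPolynomial.C_surjective (Fin 0) P
    have := hv (fun i => i.elim0)
    rw [eval_C] at this
    rw [this, map_zero]
  | succ k ih =>
    intro P hdeg hv
    set q := finSuccEquiv F k P with hq
    have hq0 : q = 0 := by
      apply Polynomial.ext
      intro i
      rw [Polynomial.coeff_zero]
      by_cases hci : q.coeff i = 0
      · exact hci
      apply ih
      · refine lt_of_le_of_lt ?_ hdeg
        have := MvPolynomial.totalDegree_coeff_finSuccEquiv_add_le P i hci
        exact_mod_cast Nat.cast_le.mpr (le_trans (Nat.le_add_right _ _) this)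
      · intro s
        have hmap : (q.map (eval s)) = 0 := by
          apply Polynomial.eq_zero_of_forall_eval_zero_of_natDegree_lt_card
          · intro y
            rw [← MvPolynomial.eval_eq_eval_mv_eval']
            exact hv _
          · refine lt_of_le_of_lt ?_ hdeg
            have h1 : (q.map (eval s)).natDegree ≤ q.natDegree := Polynomial.natDegree_map_le
            have h2 : q.natDegree = P.degreeOf 0 := MvPolynomial.natDegree_finSuccEquiv P
            have h3 : P.degreeOf 0 ≤ P.totalDegree := MvPolynomial.degreeOf_le_totalDegree P 0
            exact_mod_cast Nat.cast_le.mpr (h1.trans (h2.le.trans h3))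
        have := congrArg (fun r => Polynomial.coeff r i) hmap
        simpa [Polynomial.coeff_map] using this
    have : P = (finSuccEquiv F k).symm q := by rw [hq, AlgEquiv.symm_apply_apply]
    rw [this, hq0, map_zero]

/-- Let `F ⊆ K` be a field extension and `0 < n ≤ p` with `|F| > n`. If `A` is an `n×p`
matrix over `F` and `V₀` a linear subspace of `Mat_{n,p}(F)` such that `rank (A + N) < n`
for all `N ∈ V₀`, then every `K`-linear combination `A + Σᵢ cᵢ Nᵢ` with `cᵢ ∈ K` and
`Nᵢ ∈ V₀` has rank (over `K`) less than `n`. -/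
theorem rank_bound_extends_to_extension (F K : Type*) [Field F] [Field K] [Algebra F K]
    (n p : ℕ) (hn : 0 < n) (hnp : n ≤ p) (hcard : (n : Cardinal) < Cardinal.mk F)
    (A : Matrix (Fin n) (Fin p) F) (V₀ : Submodule F (Matrix (Fin n) (Fin p) F))
    (hrk : ∀ N ∈ V₀, (A + N).rank < n) :
    ∀ (k : ℕ) (c : Fin k → K) (N : Fin k → Matrix (Fin n) (Fin p) F),
      (∀ i, N i ∈ V₀) →
      (A.map (algebraMap F K) + ∑ i, c i • (N i).map (algebraMap F K)).rank < n := by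
  intro k c N hN
  set φ := algebraMap F K
  set MK : Matrix (Fin n) (Fin p) K := A.map φ + ∑ i, c i • (N i).map φ with hMK
  apply aux_rank_lt_of_det_submatrix hn
  intro S
  -- the generic matrix of polynomials
  set Mp : Matrix (Fin n) (Fin p) (MvPolynomial (Fin k) F) :=
    fun i j => C (A i j) + ∑ t, X t * C (N t i j) with hMp
  set P : MvPolynomial (Fin k) F := (Mp.submatrix id S).det with hP
  -- evaluation over F
  have heval : ∀ a : Fin k → F, eval a P = ((A + ∑ t, a t • N t).submatrix id S).det := by
    intro a
    rw [hP, RingHom.map_det]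
    congr 1
    ext i j
    simp [hMp, Matrix.add_apply, Matrix.sum_apply, Matrix.smul_apply, smul_eq_mul]
    show eval a (C (A i (S j)) + ∑ t, X t * C (N t i (S j))) = _
    simp
  have hvanish : ∀ a : Fin k → F, eval a P = 0 := by
    intro a
    rw [heval a]
    apply aux_det_submatrix_eq_zero
    exact hrk _ (Submodule.sum_mem _ fun t _ => V₀.smul_mem _ (hN t))
  -- degree bound
  have hdeg : P.totalDegree ≤ n := by
    apply aux_det_totalDegree
    intro i j
    refine (MvPolynomial.totalDegree_add _ _).trans (max_le ?_ ?_)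
    · simp [MvPolynomial.totalDegree_C]
    · refine (MvPolynomial.totalDegree_finset_sum _ _).trans (Finset.sup_le fun t _ => ?_)
      refine (MvPolynomial.totalDegree_mul _ _).trans ?_
      simp [MvPolynomial.totalDegree_X, MvPolynomial.totalDegree_C]
  -- the polynomial is identically zero
  have hP0 : P = 0 :=
    aux_mv_eq_zero k P (lt_of_le_of_lt (by exact_mod_cast Nat.cast_le.mpr hdeg) hcard) hvanish
  -- evaluate over K
  have : (aeval c) P = (MK.submatrix id S).det := by
    rw [hP, ← RingHom.coe_coe (aeval c), RingHom.map_det]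
    congr 1
    ext i j
    simp [hMp, hMK, Matrix.add_apply, Matrix.sum_apply, Matrix.smul_apply, Matrix.map_apply,
      smul_eq_mul, Algebra.smul_def]
    show aeval c (C (A i (S j)) + ∑ t, X t * C (N t i (S j))) = _
    simp [φ]
  rw [← this, hP0, map_zero]
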